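/- With identical member accuracy 1/2 + α, α ∈ (0,1/2), the majority accuracy of 2m+1 members tends to 1 as m → ∞: lim_{m→∞} Σ_{k=m+1}^{2m+1} C(2m+1,k) (1/2+α)^k (1/2−α)^{2m+1−k} = 1. -/

import Mathlib

open Finset Filter

/-- With identical member accuracy `1/2 + α`, `α ∈ (0,1/2)`, the majority accuracy of
`2m+1` independent voters tends to 1 as `m → ∞`. -/
theorem majority_tendsto_one (α : ℝ) (hα : α ∈ Set.Ioo (0 : ℝ) (1/2)) :
    Tendsto (fun m : ℕ => ∑ k ∈ Finset.Icc (m + 1) (2 * m + 1),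
        ((2 * m + 1).choose k : ℝ) * (1/2 + α) ^ k * (1/2 - α) ^ (2 * m + 1 - k))
      atTop (nhds 1) := by
  obtain ⟨hα0, hα2⟩ := hα
  set p : ℝ := 1/2 + α with hp
  set q : ℝ := 1/2 - α with hq
  have hq0 : 0 < q := by rw [hq]; linarith
  have hp0 : 0 < p := by rw [hp]; linarith
  have hqp : q ≤ p := by rw [hp, hq]; linarith
  have hpq1 : p + q = 1 := by rw [hp, hq]; ring
  set T : ℕ → ℝ := fun m => ∑ k ∈ Finset.range (m+1),
      ((2 * m + 1).choose k : ℝ) * p ^ k * q ^ (2 * m + 1 - k) with hT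
  have key : ∀ m : ℕ, (∑ k ∈ Finset.Icc (m + 1) (2 * m + 1),
        ((2 * m + 1).choose k : ℝ) * p ^ k * q ^ (2 * m + 1 - k)) = 1 - T m := by
    intro m
    have h1 : (∑ k ∈ Finset.range (2*m+1+1),
        ((2 * m + 1).choose k : ℝ) * p ^ k * q ^ (2 * m + 1 - k)) = 1 := by
      have h := add_pow p q (2*m+1)
      rw [hpq1, one_pow] at h
      rw [h]
      exact Finset.sum_congr rfl fun k _ => by ring
    have hsplit : Finset.range (2*m+1+1) =
        Finset.range (m+1) ∪ Finset.Icc (m+1) (2*m+1) := by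
      rw [Finset.range_eq_Ico, Finset.range_eq_Ico, ← Finset.Ico_add_one_right_eq_Icc]
      rw [Finset.Ico_union_Ico_eq_Ico (Nat.zero_le _) (by omega : m + 1 ≤ 2 * m + 1 + 1)]
    have hdisj : Disjoint (Finset.range (m+1)) (Finset.Icc (m+1) (2*m+1)) := by
      rw [Finset.disjoint_left]
      intro a ha hb
      simp only [Finset.mem_range] at ha
      simp only [Finset.mem_Icc] at hb
      omega
    rw [hsplit, Finset.sum_union hdisj] at h1
    rw [hT]
    linarith
  have hTle : ∀ m : ℕ, T m ≤ 2 * q * (4 * p * q) ^ m := by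
    intro m
    have step1 : T m ≤ ∑ k ∈ Finset.range (m+1),
        ((2 * m + 1).choose k : ℝ) * (p ^ m * q ^ (m+1)) := by
      apply Finset.sum_le_sum
      intro k hk
      simp only [Finset.mem_range] at hk
      have hk' : k ≤ m := by omega
      have hsub : 2 * m + 1 - k = (m + 1) + (m - k) := by omega
      rw [hsub, pow_add, mul_assoc]
      have hC : (0:ℝ) ≤ ((2 * m + 1).choose k : ℝ) := Nat.cast_nonneg _
      apply mul_le_mul_of_nonneg_left _ hC
      have h1 : q ^ (m - k) ≤ p ^ (m - k) :=
        pow_le_pow_left₀ hq0.le hqp _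
      calc p ^ k * (q ^ (m+1) * q ^ (m - k))
          ≤ p ^ k * (q ^ (m+1) * p ^ (m - k)) := by
            apply mul_le_mul_of_nonneg_left _ (pow_nonneg hp0.le _)
            exact mul_le_mul_of_nonneg_left h1 (pow_nonneg hq0.le _)
        _ = p ^ m * q ^ (m+1) := by
            rw [show p ^ k * (q ^ (m+1) * p ^ (m - k)) =
              (p ^ k * p ^ (m - k)) * q ^ (m+1) by ring, ← pow_add,
              show k + (m - k) = m by omega]
    have step2 : (∑ k ∈ Finset.range (m+1), ((2 * m + 1).choose k : ℝ))
        ≤ 2 ^ (2*m+1) := by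
      have h2 : (∑ k ∈ Finset.range (m+1), ((2 * m + 1).choose k : ℝ))
          ≤ ∑ k ∈ Finset.range (2*m+1+1), ((2 * m + 1).choose k : ℝ) := by
        apply Finset.sum_le_sum_of_subset_of_nonneg
        · apply Finset.range_subset_range.2; omega
        · intro i _ _; exact Nat.cast_nonneg _
      have h3 : (∑ k ∈ Finset.range (2*m+1+1), ((2 * m + 1).choose k : ℝ))
          = 2 ^ (2*m+1) := by
        rw [← Nat.cast_sum]
        rw [Nat.sum_range_choose]
        push_cast
        ring
      linarith
    calc T m ≤ ∑ k ∈ Finset.range (m+1),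
          ((2 * m + 1).choose k : ℝ) * (p ^ m * q ^ (m+1)) := step1
      _ = (∑ k ∈ Finset.range (m+1), ((2 * m + 1).choose k : ℝ))
          * (p ^ m * q ^ (m+1)) := by rw [Finset.sum_mul]
      _ ≤ 2 ^ (2*m+1) * (p ^ m * q ^ (m+1)) := by
          apply mul_le_mul_of_nonneg_right step2
          positivity
      _ = 2 * q * (4 * p * q) ^ m := by
          rw [pow_succ, pow_add, pow_mul, mul_pow, mul_pow]
          ring
  have hT0 : ∀ m : ℕ, 0 ≤ T m := by
    intro m
    apply Finset.sum_nonneg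
    intro k _
    have := pow_nonneg hp0.le k
    have := pow_nonneg hq0.le (2*m+1-k)
    positivity
  have hr0 : (0:ℝ) ≤ 4 * p * q := by positivity
  have hr1 : 4 * p * q < 1 := by
    rw [hp, hq]; nlinarith
  have hg : Tendsto (fun m : ℕ => 2 * q * (4 * p * q) ^ m) atTop (nhds 0) := by
    have := tendsto_pow_atTop_nhds_zero_of_lt_one hr0 hr1
    have h := this.const_mul (2 * q)
    simpa using h
  have hTtend : Tendsto T atTop (nhds 0) :=
    squeeze_zero hT0 hTle hg
  have : Tendsto (fun m => 1 - T m) atTop (nhds (1 - 0)) :=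
    tendsto_const_nhds.sub hTtend
  simp only [sub_zero] at this
  convert this using 2 with m
  exact key m
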